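/- The value γ₀ = σ²δ²/(2η²) satisfies f₁(γ₀) = 0, and γ₀ is the unique positive solution of f₁(γ) = 0; moreover f₁(γ) < 0 for 0 < γ < γ₀ and f₁(γ) > 0 for γ > γ₀. -/
import Mathlib


open Real Filter Set

/-- f₁(γ) = ηγ/(δ(δ+γ)) − σ²/(η + √(η² + 2σ²(δ+γ))). -/
noncomputable def f1 (σ η δ : ℝ) (γ : ℝ) : ℝ :=
  η * γ / (δ * (δ + γ)) - σ ^ 2 / (η + Real.sqrt (η ^ 2 + 2 * σ ^ 2 * (δ + γ)))

lemma f1_strictMono (σ η δ : ℝ) (hσ : 0 < σ) (hη : 0 < η) (hδ : 0 < δ)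
    {a b : ℝ} (ha : 0 < a) (hab : a < b) : f1 σ η δ a < f1 σ η δ b := by
  have hb : 0 < b := ha.trans hab
  have hda : 0 < δ + a := by linarith
  have hdb : 0 < δ + b := by linarith
  have hsa : 0 < Real.sqrt (η ^ 2 + 2 * σ ^ 2 * (δ + a)) := by
    apply Real.sqrt_pos.2; positivity
  have hsb : 0 < Real.sqrt (η ^ 2 + 2 * σ ^ 2 * (δ + b)) := by
    apply Real.sqrt_pos.2; positivity
  have h1 : η * a / (δ * (δ + a)) < η * b / (δ * (δ + b)) := by
    rw [div_lt_div_iff₀ (by positivity) (by positivity)]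
    nlinarith [mul_pos (mul_pos hη hδ) (mul_pos hδ (sub_pos.2 hab)), mul_pos (mul_pos hσ hσ) (sub_pos.2 hab)]
  have hsqrt : Real.sqrt (η ^ 2 + 2 * σ ^ 2 * (δ + a)) <
      Real.sqrt (η ^ 2 + 2 * σ ^ 2 * (δ + b)) := by
    apply Real.sqrt_lt_sqrt (by positivity)
    nlinarith [mul_pos (mul_pos hη hδ) (mul_pos hδ (sub_pos.2 hab)), mul_pos (mul_pos hσ hσ) (sub_pos.2 hab)]
  have h2 : σ ^ 2 / (η + Real.sqrt (η ^ 2 + 2 * σ ^ 2 * (δ + b))) <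
      σ ^ 2 / (η + Real.sqrt (η ^ 2 + 2 * σ ^ 2 * (δ + a))) := by
    apply div_lt_div_of_pos_left (by positivity) (by positivity)
    linarith
  unfold f1
  linarith

lemma f1_root (σ η δ : ℝ) (hσ : 0 < σ) (hη : 0 < η) (hδ : 0 < δ) :
    f1 σ η δ (σ ^ 2 * δ ^ 2 / (2 * η ^ 2)) = 0 := by
  have hs : Real.sqrt (η ^ 2 + 2 * σ ^ 2 * (δ + σ ^ 2 * δ ^ 2 / (2 * η ^ 2)))
      = η + σ ^ 2 * δ / η := by
    rw [show η ^ 2 + 2 * σ ^ 2 * (δ + σ ^ 2 * δ ^ 2 / (2 * η ^ 2))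
        = (η + σ ^ 2 * δ / η) ^ 2 by field_simp; ring]
    exact Real.sqrt_sq (by positivity)
  unfold f1
  rw [hs]
  rw [sub_eq_zero]
  rw [div_eq_div_iff (by positivity) (by positivity)]
  field_simp
  ring

theorem f1_root_unique (σ η δ : ℝ) (hσ : 0 < σ) (hη : 0 < η) (hδ : 0 < δ) :
    f1 σ η δ (σ ^ 2 * δ ^ 2 / (2 * η ^ 2)) = 0 ∧
    (∀ γ : ℝ, 0 < γ → f1 σ η δ γ = 0 → γ = σ ^ 2 * δ ^ 2 / (2 * η ^ 2)) ∧
    (∀ γ : ℝ, 0 < γ → γ < σ ^ 2 * δ ^ 2 / (2 * η ^ 2) → f1 σ η δ γ < 0) ∧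
    (∀ γ : ℝ, σ ^ 2 * δ ^ 2 / (2 * η ^ 2) < γ → 0 < f1 σ η δ γ) := by
  have hγ0 : 0 < σ ^ 2 * δ ^ 2 / (2 * η ^ 2) := by positivity
  have hroot := f1_root σ η δ hσ hη hδ
  refine ⟨hroot, ?_, ?_, ?_⟩
  · intro γ hγ hf
    rcases lt_trichotomy γ (σ ^ 2 * δ ^ 2 / (2 * η ^ 2)) with h | h | h
    · have := f1_strictMono σ η δ hσ hη hδ hγ h
      rw [hf, hroot] at this; exact absurd this (lt_irrefl 0)
    · exact h
    · have := f1_strictMono σ η δ hσ hη hδ hγ0 h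
      rw [hf, hroot] at this; exact absurd this (lt_irrefl 0)
  · intro γ hγ h
    have := f1_strictMono σ η δ hσ hη hδ hγ h
    rw [hroot] at this; exact this
  · intro γ h
    have := f1_strictMono σ η δ hσ hη hδ hγ0 h
    rw [hroot] at this; exact this
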